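/- For every U ⊆ [n], the set A_U(n) is a (0,1)-sublattice of the permutohedron P(n): the meet in A_U(n) of two elements is their intersection, and the join is the transitive closure of their union, which coincide with meet and join computed in P(n). -/

import Mathlib

/-- `J_n = {(i,j) : 1 ≤ i < j ≤ n}`. -/
def JnS (n : ℕ) : Set (ℕ × ℕ) := {p | 1 ≤ p.1 ∧ p.1 < p.2 ∧ p.2 ≤ n}

/-- Transitivity of a set of pairs, viewed as a binary relation. -/
def TransSet (x : Set (ℕ × ℕ)) : Prop := ∀ i j k : ℕ, (i, j) ∈ x → (j, k) ∈ x → (i, k) ∈ x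

/-- A subset of `J_n` is closed if it is transitive. -/
def ClosedIn (n : ℕ) (x : Set (ℕ × ℕ)) : Prop := x ⊆ JnS n ∧ TransSet x

/-- A subset of `J_n` is clopen if both it and its complement in `J_n` are closed. -/
def ClopenIn (n : ℕ) (x : Set (ℕ × ℕ)) : Prop := ClosedIn n x ∧ ClosedIn n (JnS n \ x)

/-- The transitive closure of a set of pairs. -/
def clS (x : Set (ℕ × ℕ)) : Set (ℕ × ℕ) :=
  {p | Relation.TransGen (fun a b => (a, b) ∈ x) p.1 p.2}

/-- The interior: the largest open subset of `x`. -/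
def intS (n : ℕ) (x : Set (ℕ × ℕ)) : Set (ℕ × ℕ) := JnS n \ clS (JnS n \ x)

/-- `A_U(n)`: transitive subsets `x ⊆ J_n` such that whenever `i < j < k` and
`(i,k) ∈ x`, then `(i,j) ∈ x` if `j ∈ U` and `(j,k) ∈ x` if `j ∉ U`. -/
def AUset (n : ℕ) (U : Set ℕ) (x : Set (ℕ × ℕ)) : Prop :=
  (x ⊆ JnS n ∧ ∀ i j k : ℕ, i < j → j < k → (i, k) ∈ x →
    ((j ∈ U → (i, j) ∈ x) ∧ (j ∉ U → (j, k) ∈ x))) ∧ TransSet x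

lemma clS_subset_of_trans {w : Set (ℕ × ℕ)} (hw : TransSet w) : clS w ⊆ w := by
  rintro ⟨a, b⟩ h
  have h' : Relation.TransGen (fun a b => (a, b) ∈ w) a b := h
  clear h
  induction h' with
  | single h => exact h
  | tail _ h2 ih => exact hw _ _ _ ih h2

lemma subset_clS (w : Set (ℕ × ℕ)) : w ⊆ clS w := by
  rintro ⟨a, b⟩ h
  exact Relation.TransGen.single h

lemma clS_subset_Jn {n : ℕ} {w : Set (ℕ × ℕ)} (hw : w ⊆ JnS n) : clS w ⊆ JnS n := by
  rintro ⟨a, b⟩ h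
  have h' : Relation.TransGen (fun a b => (a, b) ∈ w) a b := h
  clear h
  induction h' with
  | single h => exact hw h
  | tail _ h2 ih =>
    have h3 := hw h2
    exact ⟨ih.1, lt_trans ih.2.1 h3.2.1, h3.2.2⟩

lemma complement_trans {n : ℕ} {U : Set ℕ} {x : Set (ℕ × ℕ)} (hx : AUset n U x) :
    TransSet (JnS n \ x) := by
  intro i j k hij hjk
  have hij1 := hij.1
  have hjk1 := hjk.1
  refine ⟨⟨hij1.1, lt_trans hij1.2.1 hjk1.2.1, hjk1.2.2⟩, ?_⟩
  intro hik
  have h := hx.1.2 i j k hij1.2.1 hjk1.2.1 hik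
  by_cases hU : j ∈ U
  · exact hij.2 (h.1 hU)
  · exact hjk.2 (h.2 hU)

lemma key {n : ℕ} {U : Set ℕ} {x y : Set (ℕ × ℕ)} (hx : AUset n U x) (hy : AUset n U y)
    {i k : ℕ} (h : (i, k) ∈ clS (x ∪ y)) :
    ∀ j, i < j → j < k →
      (j ∈ U → (i, j) ∈ clS (x ∪ y)) ∧ (j ∉ U → (j, k) ∈ clS (x ∪ y)) := by
  have hsub : x ∪ y ⊆ JnS n := Set.union_subset hx.1.1 hy.1.1
  have edge : ∀ a b j : ℕ, (a, b) ∈ x ∪ y → a < j → j < b →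
      (j ∈ U → (a, j) ∈ x ∪ y) ∧ (j ∉ U → (j, b) ∈ x ∪ y) := by
    rintro a b j (hab | hab) haj hjb
    · have := hx.1.2 a j b haj hjb hab
      exact ⟨fun hU => Or.inl (this.1 hU), fun hU => Or.inl (this.2 hU)⟩
    · have := hy.1.2 a j b haj hjb hab
      exact ⟨fun hU => Or.inr (this.1 hU), fun hU => Or.inr (this.2 hU)⟩
  have h' : Relation.TransGen (fun a b => (a, b) ∈ x ∪ y) i k := h
  clear h
  induction h' using Relation.TransGen.head_induction_on with
  | single hik =>
    intro j hij hjk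
    have := edge _ _ j hik hij hjk
    exact ⟨fun hU => subset_clS _ (this.1 hU), fun hU => subset_clS _ (this.2 hU)⟩
  | head him hmk IH =>
    rename_i i' m
    intro j hij hjk
    rcases lt_trichotomy j m with hjm | hjm | hjm
    · have := edge _ _ j him hij hjm
      constructor
      · intro hU
        exact subset_clS _ (this.1 hU)
      · intro hU
        exact Relation.TransGen.head (this.2 hU) hmk
    · subst hjm
      exact ⟨fun _ => subset_clS _ him, fun _ => hmk⟩
    · have := IH j hjm hjk
      constructor
      · intro hU
        exact Relation.TransGen.head him (this.1 hU)
      · intro hU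
        exact this.2 hU

/-- `A_U(n)` is a `(0,1)`-sublattice of the permutohedron `P(n)`: its elements are clopen,
it contains the bottom `∅` and the top `J_n`, it is closed under the meet `x ∩ y` and
the join `cl (x ∪ y)` of `P(n)`, and on `A_U(n)` the meet of `P(n)` is intersection
(`int (x ∩ y) = x ∩ y`) while the join is the transitive closure of the union. -/
theorem stmt9 (n : ℕ) (U : Set ℕ) :
    (∀ x, AUset n U x → ClopenIn n x) ∧
    AUset n U ∅ ∧ AUset n U (JnS n) ∧
    (∀ x y, AUset n U x → AUset n U y →
      AUset n U (x ∩ y) ∧ intS n (x ∩ y) = x ∩ y ∧ AUset n U (clS (x ∪ y))) := by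
  refine ⟨?_, ?_, ?_, ?_⟩
  · intro x hx
    exact ⟨⟨hx.1.1, hx.2⟩, Set.diff_subset, complement_trans hx⟩
  · exact ⟨⟨Set.empty_subset _, fun i j k _ _ h => absurd h (Set.notMem_empty _)⟩,
      fun i j k h => absurd h (Set.notMem_empty _)⟩
  · refine ⟨⟨subset_rfl, ?_⟩, ?_⟩
    · intro i j k hij hjk hik
      exact ⟨fun _ => ⟨hik.1, hij, le_of_lt (lt_of_lt_of_le hjk hik.2.2)⟩,
        fun _ => ⟨le_trans hik.1 (le_of_lt hij), hjk, hik.2.2⟩⟩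
    · intro i j k hij hjk
      exact ⟨hij.1, lt_trans hij.2.1 hjk.2.1, hjk.2.2⟩
  · intro x y hx hy
    have hxy : AUset n U (x ∩ y) := by
      refine ⟨⟨fun p hp => hx.1.1 hp.1, ?_⟩, ?_⟩
      · intro i j k hij hjk hik
        have h1 := hx.1.2 i j k hij hjk hik.1
        have h2 := hy.1.2 i j k hij hjk hik.2
        exact ⟨fun hU => ⟨h1.1 hU, h2.1 hU⟩, fun hU => ⟨h1.2 hU, h2.2 hU⟩⟩
      · intro i j k h1 h2
        exact ⟨hx.2 i j k h1.1 h2.1, hy.2 i j k h1.2 h2.2⟩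
    refine ⟨hxy, ?_, ?_⟩
    · have hct : TransSet (JnS n \ (x ∩ y)) := complement_trans hxy
      have hcl : clS (JnS n \ (x ∩ y)) = JnS n \ (x ∩ y) :=
        subset_antisymm (clS_subset_of_trans hct) (subset_clS _)
      rw [intS, hcl, Set.diff_diff_cancel_left hxy.1.1]
    · refine ⟨⟨clS_subset_Jn (Set.union_subset hx.1.1 hy.1.1), ?_⟩, ?_⟩
      · intro i j k hij hjk hik
        exact key hx hy hik j hij hjk
      · intro i j k h1 h2
        exact Relation.TransGen.trans h1 h2
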